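/- There exists a left group-e-semigroup that is not a left group-e-homogroup: let (G,·) be any group with identity e having more than one element, and define x⊙y := x for all x,y ∈ G. Then ⊙ is associative and the left e-join law e⊙(x·y) = e⊙(x⊙y) holds for all x,y, so (G,·,e,⊙) is a left group-e-semigroup; but no subset H ⊆ G is simultaneously an ideal of (G,⊙) and a group under ⊙, so (G,⊙) is not a homogroup. -/
import Mathlib


/-- A subset `I` is an ideal of the semigroup `(G, op)`. -/
def IsMagmaIdeal {G : Type*} (op : G → G → G) (I : Set G) : Prop :=
  ∀ x : G, ∀ i ∈ I, op x i ∈ I ∧ op i x ∈ I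

/-- A subset `H` is a subgroup of the semigroup `(G, op)`: it is closed under `op`
and forms a group under `op`. -/
def IsSubgroupUnder {G : Type*} (op : G → G → G) (H : Set G) : Prop :=
  (∀ a ∈ H, ∀ b ∈ H, op a b ∈ H) ∧
  ∃ ι ∈ H, (∀ a ∈ H, op ι a = a ∧ op a ι = a) ∧
    ∀ a ∈ H, ∃ b ∈ H, op a b = ι ∧ op b a = ι

/-- There exists a left group-`e`-semigroup that is not a left
group-`e`-homogroup: for any group `G` with more than one element and the operation
`x ⊙ y := x`, the operation `⊙` is associative and the left `e`-join law holds
(so `(G, ·, 1, ⊙)` is a left group-`e`-semigroup), but no subset of `G` is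
simultaneously an ideal of `(G, ⊙)` and a group under `⊙`. -/
theorem stmt_5 {G : Type*} [Group G] (hG : Nontrivial G)
    (op : G → G → G) (hop : ∀ x y : G, op x y = x) :
    (∀ x y z : G, op (op x y) z = op x (op y z)) ∧
    (∀ x y : G, op 1 (x * y) = op 1 (op x y)) ∧
    ¬ ∃ H : Set G, IsMagmaIdeal op H ∧ IsSubgroupUnder op H := by
  refine ⟨fun x y z => by simp [hop], fun x y => by simp [hop], ?_⟩
  rintro ⟨H, hI, hcl, ι, hι, hid, -⟩
  obtain ⟨a, b, hab⟩ := hG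
  have hmem : ∀ x : G, x ∈ H := fun x => by
    have := (hI x ι hι).1; rwa [hop] at this
  have heq : ∀ x : G, ι = x := fun x => by
    have := (hid x (hmem x)).1; rwa [hop] at this
  exact hab ((heq a).symm.trans (heq b))
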